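/- There exists a global section of the observable presheaf of L(ℂ³) that is not induced by any selfadjoint operator: given two noncommuting rank-one projections P₁, P₂, the family assigning to each abelian von Neumann subalgebra A the projection Q_A = I − P_k if P_k ∈ A (k = 1,2) and Q_A = I otherwise is a compatible family (global section) but is not the family of restrictions ρ_A(A₀) of any single selfadjoint A₀ ∈ L(ℂ³). -/

import Mathlib

open scoped Classical

noncomputable section

/-- The orthogonal projection onto a subspace `K` of `ℂ³`, as an operator. -/
def opOf (K : Submodule ℂ (EuclideanSpace ℂ (Fin 3))) :
    EuclideanSpace ℂ (Fin 3) →L[ℂ] EuclideanSpace ℂ (Fin 3) :=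
  K.subtypeL.comp (K.orthogonalProjectionOnto)

/-- An abelian (von Neumann, automatically so in finite dimension) subalgebra
of `L(ℂ³)`. -/
def IsAbelianStar
    (A : StarSubalgebra ℂ (EuclideanSpace ℂ (Fin 3) →L[ℂ] EuclideanSpace ℂ (Fin 3))) : Prop :=
  ∀ a ∈ A, ∀ b ∈ A, a * b = b * a

/-- The `A`-support of a projection (represented by its range subspace `K`):
`s_A(K) = ⋀{ W | proj W ∈ A, K ≤ W }`. -/
def suppA
    (A : StarSubalgebra ℂ (EuclideanSpace ℂ (Fin 3) →L[ℂ] EuclideanSpace ℂ (Fin 3)))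
    (K : Submodule ℂ (EuclideanSpace ℂ (Fin 3))) : Submodule ℂ (EuclideanSpace ℂ (Fin 3)) :=
  sInf {W | opOf W ∈ A ∧ K ≤ W}

/-- The spectral family of an operator on `ℂ³`:
`E^T_λ` = sum of the eigenspaces with eigenvalue `≤ λ`. -/
def specE (T : EuclideanSpace ℂ (Fin 3) →L[ℂ] EuclideanSpace ℂ (Fin 3)) (l : ℝ) :
    Submodule ℂ (EuclideanSpace ℂ (Fin 3)) :=
  ⨆ m : {m : ℝ // m ≤ l}, Module.End.eigenspace (T.toLinearMap : Module.End ℂ _) (m.1 : ℂ)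

/-- The spectral order: `S ≤_s T` iff `E^T_λ ≤ E^S_λ` for all `λ`. -/
def specLE (S T : EuclideanSpace ℂ (Fin 3) →L[ℂ] EuclideanSpace ℂ (Fin 3)) : Prop :=
  ∀ l : ℝ, specE T l ≤ specE S l

/-! ### Auxiliary material -/

local notation "H3" => EuclideanSpace ℂ (Fin 3)
local notation "L3" => (EuclideanSpace ℂ (Fin 3) →L[ℂ] EuclideanSpace ℂ (Fin 3))

lemma opOf_apply_mem {K : Submodule ℂ H3} {x : H3} (hx : x ∈ K) : opOf K x = x := by
  simpa [opOf] using (Submodule.starProjection_eq_self_iff (K := K)).mpr hx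

lemma opOf_apply_orth {K : Submodule ℂ H3} {x : H3} (hx : x ∈ Kᗮ) : opOf K x = 0 := by
  simp [opOf, Submodule.orthogonalProjectionOnto_apply_of_mem_orthogonal hx]

lemma opOf_mem_range (K : Submodule ℂ H3) (x : H3) : opOf K x ∈ K := by
  simp [opOf]

lemma opOf_top : opOf (⊤ : Submodule ℂ H3) = 1 := by
  refine ContinuousLinearMap.ext fun x => ?_
  simpa using opOf_apply_mem (K := ⊤) (x := x) trivial

lemma opOf_orth (K : Submodule ℂ H3) : opOf Kᗮ = 1 - opOf K := by
  refine ContinuousLinearMap.ext fun x => ?_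
  have h := Submodule.starProjection_add_starProjection_orthogonal (K := K) x
  simp only [opOf, ContinuousLinearMap.coe_comp', Function.comp_apply,
    Submodule.subtypeL_apply, ContinuousLinearMap.sub_apply, ContinuousLinearMap.one_apply]
  exact eq_sub_of_add_eq' h

lemma opOf_sa (K : Submodule ℂ H3) : IsSelfAdjoint (opOf K) :=
  isSelfAdjoint_starProjection K

lemma opOf_idem (K : Submodule ℂ H3) : opOf K * opOf K = opOf K := by
  refine ContinuousLinearMap.ext fun x => ?_
  exact opOf_apply_mem (opOf_mem_range K x)

lemma finrank_H3 : Module.finrank ℂ H3 = 3 := by simp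

lemma finrank_orth (K : Submodule ℂ H3) :
    Module.finrank ℂ Kᗮ = 3 - Module.finrank ℂ K := by
  have := Submodule.finrank_add_finrank_orthogonal (K := K)
  rw [finrank_H3] at this
  omega

/-! ### `suppA` computations -/

lemma suppA_orth_mem {A : StarSubalgebra ℂ L3} {K : Submodule ℂ H3}
    (hK : opOf K ∈ A) : suppA A Kᗮ = Kᗮ := by
  refine le_antisymm (sInf_le ⟨?_, le_rfl⟩) (le_sInf fun W hW => hW.2)
  rw [opOf_orth]
  exact sub_mem (one_mem A) hK

lemma suppA_orth_not_mem {A : StarSubalgebra ℂ L3} {K : Submodule ℂ H3}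
    (hK : opOf K ∉ A) (h1 : Module.finrank ℂ K = 1) : suppA A Kᗮ = ⊤ := by
  refine le_antisymm le_top (le_sInf fun W hW => ?_)
  obtain ⟨hWA, hle⟩ := hW
  have hKr : Module.finrank ℂ Kᗮ = 2 := by rw [finrank_orth, h1]
  have hW2 : 2 ≤ Module.finrank ℂ W := by
    have := Submodule.finrank_mono hle
    omega
  have hW3 : Module.finrank ℂ W ≤ 3 := by
    have := Submodule.finrank_le W
    rw [finrank_H3] at this
    exact this
  rcases eq_or_lt_of_le hW2 with h | h
  · exfalso
    have hEq : Kᗮ = W := Submodule.eq_of_le_of_finrank_eq hle (by omega)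
    rw [← hEq, opOf_orth] at hWA
    exact hK (by simpa using sub_mem (one_mem A) hWA)
  · have h3 : Module.finrank ℂ W = 3 := by omega
    have : W = ⊤ := Submodule.eq_top_of_finrank_eq (by rw [h3, finrank_H3])
    exact this.ge

lemma suppA_top (A : StarSubalgebra ℂ L3) : suppA A ⊤ = ⊤ :=
  le_antisymm le_top (le_sInf fun _ hW => hW.2)

/-! ### spectral family computations -/

lemma eigenspace_le_specE (T : L3) {m l : ℝ} (h : m ≤ l) :
    Module.End.eigenspace (T.toLinearMap : Module.End ℂ _) (m : ℂ) ≤ specE T l :=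
  le_iSup (fun m : {m : ℝ // m ≤ l} =>
    Module.End.eigenspace (T.toLinearMap : Module.End ℂ _) (m.1 : ℂ)) ⟨m, h⟩

lemma specE_mono (T : L3) {l l' : ℝ} (h : l ≤ l') : specE T l ≤ specE T l' :=
  iSup_le fun m => eigenspace_le_specE T (m.2.trans h)

lemma mem_eigen_iff {T : L3} {m : ℂ} {x : H3} :
    x ∈ Module.End.eigenspace (T.toLinearMap : Module.End ℂ _) m ↔ T x = m • x := by
  rw [Module.End.mem_eigenspace_iff]; rfl

lemma eigenspace_idem_ne {p : L3} (hp : p * p = p) {m : ℝ} (h0 : m ≠ 0) (h1 : m ≠ 1) :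
    Module.End.eigenspace (p.toLinearMap : Module.End ℂ _) (m : ℂ) = ⊥ := by
  rw [eq_bot_iff]
  intro x hx
  rw [mem_eigen_iff] at hx
  have h2 : p (p x) = p x := by
    conv_lhs => rw [← ContinuousLinearMap.mul_apply, hp]
  rw [hx, map_smul, hx, smul_smul] at h2
  have h3 : ((m : ℂ) * m - m) • x = 0 := by
    rw [sub_smul, h2, sub_self]
  rcases smul_eq_zero.mp h3 with h | h
  · exfalso
    have h4 : (m : ℂ) * ((m : ℂ) - 1) = 0 := by linear_combination h
    rcases mul_eq_zero.mp h4 with h' | h'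
    · exact h0 (by exact_mod_cast h')
    · refine h1 ?_
      have hm1 : (m : ℂ) = 1 := by linear_combination h'
      exact_mod_cast hm1
  · simpa using h

lemma specE_one_zero : specE (1 : L3) 0 = ⊥ := by
  rw [eq_bot_iff]
  refine iSup_le fun m => le_bot_iff.mpr ?_
  rw [eq_bot_iff]
  intro x hx
  rw [mem_eigen_iff] at hx
  simp only [ContinuousLinearMap.one_apply] at hx
  have hne : (1 : ℂ) - (m.1 : ℂ) ≠ 0 := by
    intro h
    have h1 : (m.1 : ℂ) = 1 := by linear_combination -h
    have h2 : (m.1 : ℝ) = 1 := by exact_mod_cast h1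
    linarith [m.2]
  have h0 : ((1 : ℂ) - (m.1 : ℂ)) • x = 0 := by
    rw [sub_smul, one_smul, ← hx, sub_self]
  simpa [smul_eq_zero, hne] using h0

lemma top_le_specE_one : (⊤ : Submodule ℂ H3) ≤ specE (1 : L3) 1 := by
  refine le_trans ?_ (eigenspace_le_specE (1 : L3) (le_refl 1))
  intro x _
  rw [mem_eigen_iff]
  simp

/-! ### adjoin of a selfadjoint projection -/

lemma mem_adjoin_sa {p x : L3} (hp : IsSelfAdjoint p)
    (hx : x ∈ StarAlgebra.adjoin ℂ ({p} : Set L3)) : x ∈ Algebra.adjoin ℂ ({p} : Set L3) := by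
  have hx' : x ∈ (StarAlgebra.adjoin ℂ ({p} : Set L3)).toSubalgebra := hx
  rw [StarAlgebra.adjoin_toSubalgebra] at hx'
  rwa [Set.star_singleton, hp.star_eq, Set.union_self] at hx'

lemma abelian_adjoin_sa {p : L3} (hp : IsSelfAdjoint p) :
    IsAbelianStar (StarAlgebra.adjoin ℂ ({p} : Set L3)) := by
  intro a ha b hb
  have ha' := mem_adjoin_sa hp ha
  have hb' := mem_adjoin_sa hp hb
  exact Algebra.commute_of_mem_adjoin_singleton_of_commute hb'
    (Algebra.commute_of_mem_adjoin_self ha').symm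

lemma commute_of_mem_adjoin {p x : L3} (hp : IsSelfAdjoint p)
    (hx : x ∈ StarAlgebra.adjoin ℂ ({p} : Set L3)) : p * x = x * p :=
  Algebra.commute_of_mem_adjoin_self (mem_adjoin_sa hp hx)

lemma mem_adjoin_idem_decomp {p x : L3} (hp : IsSelfAdjoint p) (hidem : p * p = p)
    (hx : x ∈ StarAlgebra.adjoin ℂ ({p} : Set L3)) : ∃ a b : ℂ, x = a • 1 + b • p := by
  have hx' := mem_adjoin_sa hp hx
  clear hx
  induction hx' using Algebra.adjoin_induction with
  | mem y hy =>
    rw [Set.mem_singleton_iff] at hy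
    exact ⟨0, 1, by rw [hy, zero_smul ℂ (1 : L3), zero_add, one_smul]⟩
  | algebraMap r => exact ⟨r, 0, by rw [Algebra.algebraMap_eq_smul_one, zero_smul ℂ p, add_zero]⟩
  | add y z _ _ hy hz =>
    obtain ⟨a, b, rfl⟩ := hy
    obtain ⟨c, d, rfl⟩ := hz
    exact ⟨a + c, b + d, by module⟩
  | mul y z _ _ hy hz =>
    obtain ⟨a, b, rfl⟩ := hy
    obtain ⟨c, d, rfl⟩ := hz
    refine ⟨a * c, a * d + b * c + b * d, ?_⟩
    simp only [add_mul, mul_add, smul_mul_assoc, mul_smul_comm, smul_smul, one_mul, mul_one, hidem]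
    module

lemma opOf_not_mem_adjoin {K W : Submodule ℂ H3} (hKW : K ≤ W)
    (hK : K ≠ ⊥) (hWo : Wᗮ ≠ ⊥) (hmix : W ⊓ Kᗮ ≠ ⊥) :
    opOf K ∉ StarAlgebra.adjoin ℂ ({opOf W} : Set L3) := by
  intro hmem
  obtain ⟨a, b, hab⟩ := mem_adjoin_idem_decomp (opOf_sa W) (opOf_idem W) hmem
  obtain ⟨v, hv, hv0⟩ := (Submodule.ne_bot_iff _).mp hWo
  have ha : a = 0 := by
    have e1 : opOf K v = 0 := opOf_apply_orth (Submodule.orthogonal_le hKW hv)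
    have e2 : opOf W v = 0 := opOf_apply_orth hv
    have e3 := congrArg (fun T : L3 => T v) hab
    simp only [ContinuousLinearMap.add_apply, ContinuousLinearMap.smul_apply,
      ContinuousLinearMap.one_apply, e1, e2, smul_zero, add_zero] at e3
    exact (smul_eq_zero.mp e3.symm).resolve_right hv0
  obtain ⟨u, hu, hu0⟩ := (Submodule.ne_bot_iff _).mp hmix
  have hb : b = 0 := by
    have e1 : opOf K u = 0 := opOf_apply_orth hu.2
    have e2 : opOf W u = u := opOf_apply_mem hu.1
    have e3 := congrArg (fun T : L3 => T u) hab
    simp only [ContinuousLinearMap.add_apply, ContinuousLinearMap.smul_apply,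
      ContinuousLinearMap.one_apply, e1, e2, ha, zero_smul, zero_add] at e3
    exact (smul_eq_zero.mp e3.symm).resolve_right hu0
  obtain ⟨x, hx, hx0⟩ := (Submodule.ne_bot_iff _).mp hK
  have hfix : opOf K x = x := opOf_apply_mem hx
  have e3 := congrArg (fun T : L3 => T x) hab
  simp only [ha, hb, ContinuousLinearMap.add_apply, ContinuousLinearMap.smul_apply,
    ContinuousLinearMap.one_apply, zero_smul, add_zero] at e3
  rw [hfix] at e3
  exact hx0 (by simpa using e3)

/-! ### main theorem -/

theorem global_section_not_induced
    (P₁ P₂ : Submodule ℂ (EuclideanSpace ℂ (Fin 3)))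
    (h1 : Module.finrank ℂ P₁ = 1) (h2 : Module.finrank ℂ P₂ = 1)
    (hnc : opOf P₁ * opOf P₂ ≠ opOf P₂ * opOf P₁) :
    (∀ A B : StarSubalgebra ℂ (EuclideanSpace ℂ (Fin 3) →L[ℂ] EuclideanSpace ℂ (Fin 3)),
        IsAbelianStar A → IsAbelianStar B → A ≤ B →
        suppA A (if opOf P₁ ∈ B then P₁ᗮ else if opOf P₂ ∈ B then P₂ᗮ else ⊤) =
          (if opOf P₁ ∈ A then P₁ᗮ else if opOf P₂ ∈ A then P₂ᗮ else ⊤)) ∧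
    ¬ ∃ A₀ : EuclideanSpace ℂ (Fin 3) →L[ℂ] EuclideanSpace ℂ (Fin 3),
        IsSelfAdjoint A₀ ∧
        ∀ A : StarSubalgebra ℂ (EuclideanSpace ℂ (Fin 3) →L[ℂ] EuclideanSpace ℂ (Fin 3)),
          IsAbelianStar A →
          opOf (if opOf P₁ ∈ A then P₁ᗮ else if opOf P₂ ∈ A then P₂ᗮ else ⊤) ∈ A ∧
          specLE A₀ (opOf (if opOf P₁ ∈ A then P₁ᗮ else if opOf P₂ ∈ A then P₂ᗮ else ⊤)) ∧
          ∀ C ∈ A, IsSelfAdjoint C → specLE A₀ C →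
            specLE (opOf (if opOf P₁ ∈ A then P₁ᗮ else if opOf P₂ ∈ A then P₂ᗮ else ⊤)) C := by
  constructor
  · -- Part 1 : the family is a global section
    intro A B hA hB hAB
    by_cases hb1 : opOf P₁ ∈ B
    · rw [if_pos hb1]
      by_cases ha1 : opOf P₁ ∈ A
      · rw [if_pos ha1]
        exact suppA_orth_mem ha1
      · rw [if_neg ha1]
        have ha2 : opOf P₂ ∉ A := fun h => hnc (hB _ (hAB h) _ hb1).symm
        rw [if_neg ha2]
        exact suppA_orth_not_mem ha1 h1
    · rw [if_neg hb1]
      have ha1 : opOf P₁ ∉ A := fun h => hb1 (hAB h)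
      by_cases hb2 : opOf P₂ ∈ B
      · rw [if_pos hb2, if_neg ha1]
        by_cases ha2 : opOf P₂ ∈ A
        · rw [if_pos ha2]
          exact suppA_orth_mem ha2
        · rw [if_neg ha2]
          exact suppA_orth_not_mem ha2 h2
      · rw [if_neg hb2]
        have ha2 : opOf P₂ ∉ A := fun h => hb2 (hAB h)
        rw [if_neg ha1, if_neg ha2]
        exact suppA_top A
  · -- Part 2 : not induced by any selfadjoint operator
    rintro ⟨A₀, hsa, hA₀⟩
    have hne : P₁ ≠ P₂ := fun h => hnc (by rw [h])
    have hbot1 : P₁ ≠ ⊥ := by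
      intro h
      rw [h, finrank_bot] at h1
      exact zero_ne_one h1
    -- the rank-two subspace W = P₁ ⊔ P₂
    set W : Submodule ℂ H3 := P₁ ⊔ P₂ with hWdef
    have hinf : P₁ ⊓ P₂ = ⊥ := by
      have hlt : P₁ ⊓ P₂ < P₁ := by
        refine lt_of_le_of_ne inf_le_left fun h => hne ?_
        refine Submodule.eq_of_le_of_finrank_le (h ▸ inf_le_right) (by rw [h1, h2])
      have := Submodule.finrank_lt_finrank_of_lt hlt
      rw [h1] at this
      exact Submodule.finrank_eq_zero.mp (by omega)
    have hW2 : Module.finrank ℂ W = 2 := by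
      have h4 := Submodule.finrank_sup_add_finrank_inf_eq P₁ P₂
      rw [hinf, finrank_bot, h1, h2] at h4
      simpa [hWdef] using h4
    have hWo : Wᗮ ≠ ⊥ := by
      intro h
      have := finrank_orth W
      rw [h, finrank_bot, hW2] at this
      omega
    have hmix : ∀ K : Submodule ℂ H3, Module.finrank ℂ K = 1 → W ⊓ Kᗮ ≠ ⊥ := by
      intro K hK h
      have h4 := Submodule.finrank_sup_add_finrank_inf_eq W Kᗮ
      have h5 := Submodule.finrank_le (W ⊔ Kᗮ)
      rw [finrank_H3] at h5
      rw [h, finrank_bot, hW2, finrank_orth, hK] at h4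
      omega
    -- the three abelian algebras
    have hA1 := hA₀ (StarAlgebra.adjoin ℂ ({opOf P₁} : Set L3)) (abelian_adjoin_sa (opOf_sa P₁))
    rw [if_pos (StarAlgebra.self_mem_adjoin_singleton ℂ (opOf P₁))] at hA1
    have hA2 := hA₀ (StarAlgebra.adjoin ℂ ({opOf P₂} : Set L3)) (abelian_adjoin_sa (opOf_sa P₂))
    have hn12 : opOf P₁ ∉ StarAlgebra.adjoin ℂ ({opOf P₂} : Set L3) := fun h =>
      hnc (commute_of_mem_adjoin (opOf_sa P₂) h).symm
    rw [if_neg hn12, if_pos (StarAlgebra.self_mem_adjoin_singleton ℂ (opOf P₂))] at hA2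
    have hbot2 : P₂ ≠ ⊥ := by
      intro h
      rw [h, finrank_bot] at h2
      exact zero_ne_one h2
    have hA3 := hA₀ (StarAlgebra.adjoin ℂ ({opOf W} : Set L3)) (abelian_adjoin_sa (opOf_sa W))
    rw [if_neg (opOf_not_mem_adjoin le_sup_left hbot1 hWo (hmix P₁ h1)),
      if_neg (opOf_not_mem_adjoin le_sup_right hbot2 hWo (hmix P₂ h2)), opOf_top] at hA3
    obtain ⟨-, hle3, hmin3⟩ := hA3
    -- P₁ ⊔ P₂ is contained in the 0-spectral space of A₀
    have hPspec : ∀ K : Submodule ℂ H3, specLE A₀ (opOf Kᗮ) → K ≤ specE A₀ 0 := by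
      intro K hK
      refine le_trans (le_trans ?_ (eigenspace_le_specE (opOf Kᗮ) (le_refl 0))) (hK 0)
      intro x hx
      rw [mem_eigen_iff]
      have h0 : opOf Kᗮ x = 0 := opOf_apply_orth (Submodule.le_orthogonal_orthogonal K hx)
      rw [h0]
      simp
    have hWspec : W ≤ specE A₀ 0 := sup_le (hPspec P₁ hA1.2.1) (hPspec P₂ hA2.2.1)
    have htopspec : (⊤ : Submodule ℂ H3) ≤ specE A₀ 1 := le_trans top_le_specE_one (hle3 1)
    -- the test operator C = 1 - opOf W ∈ A₃
    set C : L3 := 1 - opOf W with hCdef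
    have hCmem : C ∈ StarAlgebra.adjoin ℂ ({opOf W} : Set L3) :=
      sub_mem (one_mem _) (StarAlgebra.self_mem_adjoin_singleton ℂ (opOf W))
    have hCsa : IsSelfAdjoint C := by
      have h0 := (opOf_sa W).star_eq
      rw [IsSelfAdjoint, hCdef]
      exact (star_sub 1 (opOf W)).trans (by rw [star_one, h0])
    have hCidem : C * C = C := by
      rw [hCdef, sub_mul, mul_sub, mul_sub, one_mul, mul_one, opOf_idem]
      abel
    have hCle : specLE A₀ C := by
      intro l
      refine iSup_le fun m => ?_
      obtain ⟨m, hm⟩ := m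
      by_cases hm0 : m = 0
      · subst hm0
        refine le_trans ?_ (le_trans hWspec (specE_mono A₀ hm))
        intro x hx
        rw [mem_eigen_iff] at hx
        simp only [Complex.ofReal_zero, zero_smul] at hx
        have hx' : x = opOf W x := by
          have h5 : x - opOf W x = 0 := by simpa [hCdef] using hx
          have := sub_eq_zero.mp h5
          exact this
        rw [hx']
        exact opOf_mem_range W x
      · by_cases hm1 : m = 1
        · subst hm1
          exact le_trans le_top (le_trans htopspec (specE_mono A₀ hm))
        · rw [eigenspace_idem_ne hCidem hm0 hm1]
          exact bot_le
    -- minimality gives a contradiction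
    have hfin := hmin3 C hCmem hCsa hCle 0
    have hWC : W ≤ specE C 0 := by
      refine le_trans ?_ (eigenspace_le_specE C (le_refl 0))
      intro x hx
      rw [mem_eigen_iff]
      have h0 : opOf W x = x := opOf_apply_mem hx
      simp [hCdef, h0]
    have hWbot : W ≤ ⊥ := by
      rw [← specE_one_zero]
      exact le_trans hWC hfin
    obtain ⟨x, hx, hx0⟩ := (Submodule.ne_bot_iff _).mp hbot1
    exact hx0 (Submodule.mem_bot ℂ |>.mp (hWbot (le_sup_left (α := Submodule ℂ H3) hx)))

end
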